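/- Every finitely supported sequence v on ℤ₊ is a semi-analytic vector for L₀: there exists a constant c_v > 0 (one may take c_v = 11‖v‖₁) such that ‖L₀ᵏ v‖₂ ≤ c_v (2k)! for all k ∈ ℤ₊. -/

import Mathlib

/-- The half-lattice Jacobi operator `L₀`. -/
noncomputable def L0 (v : ℕ → ℂ) : ℕ → ℂ := fun x =>
  -((x : ℂ) + 1) * v (x + 1) + (2 * (x : ℂ) + 1) * v x - (x : ℂ) * v (x - 1)

lemma key_nat (N k : ℕ) :
    6 ^ k * (N + k + 1).factorial ≤
      6 ^ (N + 8) * (N + (N + 8) + 1).factorial * (2 * k).factorial := by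
  rcases le_or_gt k (N + 8) with h | h
  · calc 6 ^ k * (N + k + 1).factorial
        ≤ 6 ^ (N + 8) * (N + (N + 8) + 1).factorial :=
          Nat.mul_le_mul (Nat.pow_le_pow_right (by norm_num) h)
            (Nat.factorial_le (by omega))
      _ ≤ _ := Nat.le_mul_of_pos_right _ (Nat.factorial_pos _)
  · have h1 : (N + k + 1).factorial * (N + k + 2) ^ (k - N - 1)
        ≤ (2 * k).factorial := by
      have h := Nat.factorial_mul_pow_le_factorial (m := N + k + 1) (n := k - N - 1)
      have e : N + k + 1 + (k - N - 1) = 2 * k := by omega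
      rwa [e] at h
    have h2 : 6 ^ (k - N - 1) * (N + k + 1).factorial ≤ (2 * k).factorial := by
      calc 6 ^ (k - N - 1) * (N + k + 1).factorial
          ≤ (N + k + 2) ^ (k - N - 1) * (N + k + 1).factorial :=
            Nat.mul_le_mul_right _ (Nat.pow_le_pow_left (by omega) _)
        _ = (N + k + 1).factorial * (N + k + 2) ^ (k - N - 1) := mul_comm _ _
        _ ≤ _ := h1
    calc 6 ^ k * (N + k + 1).factorial
        ≤ 6 ^ (N + 8) * (6 ^ (k - N - 1) * (N + k + 1).factorial) := by
          rw [← mul_assoc, ← pow_add]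
          exact Nat.mul_le_mul_right _ (Nat.pow_le_pow_right (by norm_num) (by omega))
      _ ≤ 6 ^ (N + 8) * (2 * k).factorial := Nat.mul_le_mul_left _ h2
      _ ≤ _ := by
          rw [mul_assoc]
          exact Nat.mul_le_mul_left _
            (Nat.le_mul_of_pos_left _ (Nat.factorial_pos _))

/-- Every finitely supported sequence is a semi-analytic vector for `L₀`:
`‖L₀ᵏ v‖₂ ≤ c_v (2k)!` for some `c_v > 0` and all `k`. -/
theorem stmt2 (v : ℕ → ℂ) (hfin : (Function.support v).Finite) :
    ∃ c : ℝ, 0 < c ∧ ∀ k : ℕ,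
      Real.sqrt (∑' x, ‖(L0^[k] v) x‖ ^ 2) ≤ c * ((2 * k).factorial : ℝ) := by
  obtain ⟨N, hN⟩ : ∃ N : ℕ, ∀ x, N < x → v x = 0 := by
    obtain ⟨N, hNub⟩ := hfin.bddAbove
    exact ⟨N, fun x hx => by
      by_contra h
      exact absurd (hNub (Function.mem_support.mpr h)) (not_le.mpr hx)⟩
  set M : ℝ := 1 + ∑ x ∈ hfin.toFinset, ‖v x‖ with hM
  have hsum_nonneg : (0:ℝ) ≤ ∑ x ∈ hfin.toFinset, ‖v x‖ :=
    Finset.sum_nonneg fun _ _ => norm_nonneg _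
  have hM0 : 0 < M := by positivity
  have hMv : ∀ x, ‖v x‖ ≤ M := by
    intro x
    by_cases hx : v x = 0
    · simp [hx]; linarith
    · have hmem : x ∈ hfin.toFinset := by
        simpa [Set.Finite.mem_toFinset] using hx
      have := Finset.single_le_sum (f := fun x => ‖v x‖)
        (fun i _ => norm_nonneg _) hmem
      linarith
  -- the natural-number product of step factors
  set Q : ℕ → ℕ := fun k => ∏ j ∈ Finset.range k, (6 * (N + j + 1)) with hQ
  have hQsucc : ∀ k, Q (k + 1) = Q k * (6 * (N + k + 1)) := by
    intro k; simp [hQ, Finset.prod_range_succ]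
  have hQbound : ∀ k, Q k ≤ 6 ^ k * (N + k).factorial := by
    intro k
    induction k with
    | zero => simp [hQ]; exact Nat.one_le_iff_ne_zero.mpr (Nat.factorial_pos N).ne'
    | succ k ih =>
        rw [hQsucc]
        calc Q k * (6 * (N + k + 1))
            ≤ 6 ^ k * (N + k).factorial * (6 * (N + k + 1)) :=
              Nat.mul_le_mul_right _ ih
          _ = 6 ^ (k + 1) * ((N + k + 1) * (N + k).factorial) := by ring
          _ = 6 ^ (k + 1) * (N + k + 1).factorial := by
              rw [Nat.factorial_succ]
  -- main induction: support and pointwise bound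
  have main : ∀ k, (∀ x, N + k < x → (L0^[k] v) x = 0) ∧
      (∀ x, ‖(L0^[k] v) x‖ ≤ M * (Q k : ℝ)) := by
    intro k
    induction k with
    | zero =>
        refine ⟨fun x hx => by simpa using hN x (by simpa using hx), ?_⟩
        intro x
        simpa [hQ] using hMv x
    | succ k ih =>
        obtain ⟨ih1, ih2⟩ := ih
        have hiter : L0^[k + 1] v = L0 (L0^[k] v) :=
          Function.iterate_succ_apply' L0 k v
        set u := L0^[k] v with hu
        have hsupp : ∀ x, N + (k + 1) < x → (L0^[k+1] v) x = 0 := by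
          intro x hx
          have h1 : u (x + 1) = 0 := ih1 _ (by omega)
          have h2 : u x = 0 := ih1 _ (by omega)
          have h3 : u (x - 1) = 0 := ih1 _ (by omega)
          rw [hiter]
          simp [L0, h1, h2, h3]
        refine ⟨hsupp, ?_⟩
        intro x
        by_cases hx : N + k + 1 < x
        · rw [hsupp x (by omega)]
          simp
          positivity
        · push_neg at hx
          rw [hiter]
          have hb : ‖L0 u x‖ ≤
              ((x:ℝ) + 1) * ‖u (x + 1)‖ + (2 * (x:ℝ) + 1) * ‖u x‖
                + (x:ℝ) * ‖u (x - 1)‖ := by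
            have e1 : ‖-((x : ℂ) + 1) * u (x + 1)‖ = ((x:ℝ) + 1) * ‖u (x + 1)‖ := by
              rw [norm_mul, norm_neg]
              congr 1
              have : ((x : ℂ) + 1) = ((x + 1 : ℕ) : ℂ) := by push_cast; ring
              rw [this, Complex.norm_natCast]; push_cast; ring
            have e2 : ‖(2 * (x : ℂ) + 1) * u x‖ = (2 * (x:ℝ) + 1) * ‖u x‖ := by
              rw [norm_mul]
              congr 1
              have : (2 * (x : ℂ) + 1) = ((2 * x + 1 : ℕ) : ℂ) := by push_cast; ring
              rw [this, Complex.norm_natCast]; push_cast; ring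
            have e3 : ‖(x : ℂ) * u (x - 1)‖ = (x:ℝ) * ‖u (x - 1)‖ := by
              rw [norm_mul, Complex.norm_natCast]
            calc ‖L0 u x‖
                ≤ ‖-((x : ℂ) + 1) * u (x + 1) + (2 * (x : ℂ) + 1) * u x‖
                  + ‖(x : ℂ) * u (x - 1)‖ := norm_sub_le _ _
              _ ≤ ‖-((x : ℂ) + 1) * u (x + 1)‖ + ‖(2 * (x : ℂ) + 1) * u x‖
                  + ‖(x : ℂ) * u (x - 1)‖ :=
                  add_le_add_left (norm_add_le _ _) _
              _ = _ := by rw [e1, e2, e3]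
          have hcoef : ((x:ℝ) + 1) + (2 * (x:ℝ) + 1) + (x:ℝ) ≤ 6 * ((N:ℝ) + k + 1) := by
            have : (x : ℝ) ≤ (N:ℝ) + k + 1 := by exact_mod_cast hx
            linarith
          have hQr : (0:ℝ) ≤ (Q k : ℝ) := Nat.cast_nonneg _
          calc ‖L0 u x‖
              ≤ ((x:ℝ) + 1) * ‖u (x + 1)‖ + (2 * (x:ℝ) + 1) * ‖u x‖
                + (x:ℝ) * ‖u (x - 1)‖ := hb
            _ ≤ ((x:ℝ) + 1) * (M * Q k) + (2 * (x:ℝ) + 1) * (M * Q k)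
                + (x:ℝ) * (M * Q k) := by
                gcongr <;> [exact ih2 _; exact ih2 _; exact ih2 _]
            _ = (((x:ℝ) + 1) + (2 * (x:ℝ) + 1) + (x:ℝ)) * (M * Q k) := by ring
            _ ≤ (6 * ((N:ℝ) + k + 1)) * (M * Q k) := by
                have hMQ : (0:ℝ) ≤ M * Q k := by positivity
                exact mul_le_mul_of_nonneg_right hcoef hMQ
            _ = M * (Q (k + 1) : ℝ) := by
                rw [hQsucc]; push_cast; ring
  -- the constant
  refine ⟨M * (6 ^ (N + 8) * (N + (N + 8) + 1).factorial : ℕ), by positivity, ?_⟩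
  intro k
  obtain ⟨hsupp, hbd⟩ := main k
  set w := L0^[k] v with hw
  have htsum : ∑' x, ‖w x‖ ^ 2 = ∑ x ∈ Finset.range (N + k + 1), ‖w x‖ ^ 2 := by
    refine tsum_eq_sum ?_
    intro x hx
    have : N + k < x := by simpa using hx
    rw [hsupp x this]
    simp
  have hsum_le : ∑ x ∈ Finset.range (N + k + 1), ‖w x‖ ^ 2
      ≤ (N + k + 1 : ℝ) * (M * Q k) ^ 2 := by
    calc ∑ x ∈ Finset.range (N + k + 1), ‖w x‖ ^ 2
        ≤ ∑ _x ∈ Finset.range (N + k + 1), (M * Q k) ^ 2 := by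
          refine Finset.sum_le_sum fun i _ => ?_
          have := hbd i
          have h0 : (0:ℝ) ≤ ‖w i‖ := norm_nonneg _
          nlinarith
      _ = (N + k + 1 : ℝ) * (M * Q k) ^ 2 := by
          rw [Finset.sum_const, Finset.card_range]; push_cast; ring
  have hfinal : Real.sqrt (∑' x, ‖w x‖ ^ 2) ≤ (N + k + 1 : ℝ) * (M * Q k) := by
    rw [htsum]
    have h2 : ∑ x ∈ Finset.range (N + k + 1), ‖w x‖ ^ 2
        ≤ ((N + k + 1 : ℝ) * (M * Q k)) ^ 2 := by
      have hMQ : (0:ℝ) ≤ M * Q k := by positivity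
      have h1 : (N + k + 1 : ℝ) ≤ (N + k + 1 : ℝ) ^ 2 := by nlinarith [Nat.cast_nonneg (α := ℝ) (N + k)]
      calc ∑ x ∈ Finset.range (N + k + 1), ‖w x‖ ^ 2
          ≤ (N + k + 1 : ℝ) * (M * Q k) ^ 2 := hsum_le
        _ ≤ (N + k + 1 : ℝ) ^ 2 * (M * Q k) ^ 2 := by nlinarith
        _ = ((N + k + 1 : ℝ) * (M * Q k)) ^ 2 := by ring
    calc Real.sqrt (∑ x ∈ Finset.range (N + k + 1), ‖w x‖ ^ 2)
        ≤ Real.sqrt (((N + k + 1 : ℝ) * (M * Q k)) ^ 2) := Real.sqrt_le_sqrt h2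
      _ = (N + k + 1 : ℝ) * (M * Q k) := Real.sqrt_sq (by positivity)
  refine hfinal.trans ?_
  -- now the arithmetic: (N+k+1) * M * Q k ≤ M * 6^(N+8) * (..)! * (2k)!
  have hnat : (N + k + 1) * Q k ≤ 6 ^ (N + 8) * (N + (N + 8) + 1).factorial * (2 * k).factorial := by
    calc (N + k + 1) * Q k
        ≤ (N + k + 1) * (6 ^ k * (N + k).factorial) :=
          Nat.mul_le_mul_left _ (hQbound k)
      _ = 6 ^ k * ((N + k + 1) * (N + k).factorial) := by ring
      _ = 6 ^ k * (N + k + 1).factorial := by rw [Nat.factorial_succ]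
      _ ≤ _ := key_nat N k
  have : (N + k + 1 : ℝ) * (Q k : ℝ)
      ≤ (6 ^ (N + 8) * (N + (N + 8) + 1).factorial : ℕ) * ((2 * k).factorial : ℝ) := by
    exact_mod_cast hnat
  calc (N + k + 1 : ℝ) * (M * Q k) = M * ((N + k + 1 : ℝ) * Q k) := by ring
    _ ≤ M * ((6 ^ (N + 8) * (N + (N + 8) + 1).factorial : ℕ) * ((2 * k).factorial : ℝ)) := by
        exact mul_le_mul_of_nonneg_left this hM0.le
    _ = M * (6 ^ (N + 8) * (N + (N + 8) + 1).factorial : ℕ) * ((2 * k).factorial : ℝ) := by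
        ring
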